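/- Let G = (N, X, π) be a finite strategic game with the π-LIP. Then there exists a strong Nash equilibrium x* ∈ X such that L_∞(x*) = min_{y∈X} L_∞(y), where L_∞(z) = max_{i∈N} π_i(z); in other words, the strong price of stability of G with respect to the social cost L_∞ equals 1. -/

import Mathlib

open Finset

/-- The vector `a` sorted in non-increasing order. -/
noncomputable def sortDesc {α : Type*} [LinearOrder α] {q : ℕ} (a : Fin q → α) : Fin q → α :=
  fun i => a (Tuple.sort a i.rev)

/-- `a` is strictly sorted-lexicographically smaller than `b`. -/
def SLexLt {α : Type*} [LinearOrder α] {q : ℕ} (a b : Fin q → α) : Prop :=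
  ∃ m : Fin q, (∀ i, i < m → sortDesc a i = sortDesc b i) ∧ sortDesc a m < sortDesc b m

/-- Sorted-lexicographic comparison of vectors indexed by an arbitrary finite type. -/
def SLexLtOn {α : Type*} [LinearOrder α] {ι : Type*} [Fintype ι] (a b : ι → α) : Prop :=
  SLexLt (a ∘ (Fintype.equivFin ι).symm) (b ∘ (Fintype.equivFin ι).symm)

/-- An improving move: some nonempty coalition `S` deviates (players outside `S`
keep their strategies) and every member of `S` strictly decreases her cost. -/
def ImprovingMove {ι : Type*} {X : ι → Type*} {β : Type*} [Preorder β]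
    (π : (∀ i, X i) → ι → β) (x y : ∀ i, X i) : Prop :=
  ∃ S : Finset ι, S.Nonempty ∧ (∀ i ∉ S, y i = x i) ∧ ∀ i ∈ S, π y i < π x i

-- Auxiliary lemmas ------------------------------------------------------

lemma le_sortDesc_zero {q : ℕ} [NeZero q] (a : Fin q → ℝ) (i : Fin q) :
    a i ≤ sortDesc a 0 := by
  have h1 : a i = (a ∘ Tuple.sort a) ((Tuple.sort a).symm i) := by simp
  have hle : (Tuple.sort a).symm i ≤ (0 : Fin q).rev := by
    rw [Fin.le_def]
    have h3 := ((Tuple.sort a).symm i).isLt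
    have h4 := Nat.pos_of_ne_zero (NeZero.ne q)
    simp only [Fin.val_rev, Fin.val_zero]
    omega
  have h2 := Tuple.monotone_sort a hle
  rw [h1]
  simpa [sortDesc] using h2

lemma sortDesc_zero_mem {q : ℕ} [NeZero q] (a : Fin q → ℝ) :
    ∃ j, sortDesc a 0 = a j := ⟨_, rfl⟩

/-- In a finite strategic game with the π-LIP there is a
strong Nash equilibrium minimizing the social cost `L_∞(z) = max_i π_i(z)`;
i.e. the strong price of stability w.r.t. `L_∞` is 1. -/
theorem stmt_6 {ι : Type*} [Fintype ι] [Nonempty ι] {X : ι → Type*}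
    [∀ i, Fintype (X i)] [∀ i, Nonempty (X i)]
    (π : (∀ i, X i) → ι → ℝ) (hπ : ∀ x i, 0 ≤ π x i)
    (hlip : ∀ x y, ImprovingMove π x y → SLexLtOn (π y) (π x)) :
    ∃ x : ∀ i, X i, (∀ y, ¬ ImprovingMove π x y) ∧
      ∀ y : ∀ i, X i,
        Finset.univ.sup' Finset.univ_nonempty (π x) ≤
          Finset.univ.sup' Finset.univ_nonempty (π y) := by
  classical
  haveI : NeZero (Fintype.card ι) := ⟨Fintype.card_ne_zero⟩
  set e := Fintype.equivFin ι with he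
  letI : LinearOrder (Lex (Fin (Fintype.card ι) → ℝ)) :=
    @Pi.Lex.linearOrder (Fin (Fintype.card ι)) (fun _ => ℝ) _
      Finite.to_wellFoundedLT _
  let f : (∀ i, X i) → Lex (Fin (Fintype.card ι) → ℝ) :=
    fun x => toLex (sortDesc ((π x) ∘ e.symm))
  obtain ⟨x, -, hx⟩ := Finset.exists_min_image (Finset.univ : Finset (∀ i, X i)) f
    Finset.univ_nonempty
  have key : ∀ y, ¬ SLexLtOn (π y) (π x) := by
    intro y hy
    have hlt : f y < f x := by
      obtain ⟨m, h1, h2⟩ := hy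
      exact ⟨m, h1, h2⟩
    exact absurd (hx y (Finset.mem_univ y)) (not_le_of_gt hlt)
  refine ⟨x, fun y hy => key y (hlip x y hy), fun y => ?_⟩
  have h0 : sortDesc ((π x) ∘ e.symm) 0 ≤ sortDesc ((π y) ∘ e.symm) 0 := by
    by_contra h
    push_neg at h
    exact key y ⟨0, fun i hi => absurd hi (by simp [Fin.lt_iff_val_lt_val]), h⟩
  refine Finset.sup'_le _ _ fun i _ => ?_
  have h1 : π x i ≤ sortDesc ((π x) ∘ e.symm) 0 := by
    simpa using le_sortDesc_zero ((π x) ∘ e.symm) (e i)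
  obtain ⟨j, hj⟩ := sortDesc_zero_mem ((π y) ∘ e.symm)
  calc π x i ≤ sortDesc ((π y) ∘ e.symm) 0 := h1.trans h0
    _ = π y (e.symm j) := hj
    _ ≤ _ := Finset.le_sup' _ (Finset.mem_univ _)
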